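/- Let Ω = [−1/2, 1/2]^n ⊂ ℝ^n, 0 < p < ∞, 0 < q ≤ ∞, σ > 0, and r > σ an integer. The quantity (∫_0^1 t^{−σq} ω_r(χ_Ω, t)_p^q dt/t)^{1/q} is finite if and only if either σ < 1/p, or σ = 1/p and q = ∞. -/

import Mathlib

open MeasureTheory Set
open scoped ENNReal

noncomputable section

/-- The `r`-th modulus of smoothness `ω_r(χ_Ω, t)_p` of the characteristic function of
the unit cube `Ω = [-1/2,1/2]^n`. -/
def omegaCube (n r : ℕ) (p : ℝ≥0∞) (t : ℝ) : ℝ≥0∞ :=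
  ⨆ h : {h : EuclideanSpace ℝ (Fin n) // ‖h‖ ≤ t},
    eLpNorm (fun x : EuclideanSpace ℝ (Fin n) =>
        ∑ i ∈ Finset.range (r + 1), (-1 : ℝ) ^ (r - i) * (r.choose i : ℝ) *
          Set.indicator {y : EuclideanSpace ℝ (Fin n) | ∀ d, |y d| ≤ 1 / 2}
            (fun _ => (1 : ℝ)) (x + (i : ℝ) • (h : EuclideanSpace ℝ (Fin n))))
      p volume


lemma volume_box (n : ℕ) (a b : Fin n → ℝ) :
    volume {y : EuclideanSpace ℝ (Fin n) | ∀ d, y d ∈ Icc (a d) (b d)} =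
      ∏ d, ENNReal.ofReal (b d - a d) := by
  have hset : {y : EuclideanSpace ℝ (Fin n) | ∀ d, y d ∈ Icc (a d) (b d)} =
      (MeasurableEquiv.toLp 2 (Fin n → ℝ)).symm ⁻¹' (univ.pi fun d => Icc (a d) (b d)) := by
    ext y
    simp [MeasurableEquiv.toLp_symm_apply, Set.mem_pi, -Set.pi_univ_Icc]
  rw [hset, (EuclideanSpace.volume_preserving_symm_measurableEquiv_toLp (Fin n)).measure_preimage
    (MeasurableSet.univ_pi fun d => measurableSet_Icc).nullMeasurableSet,
    volume_pi_pi]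
  simp [Real.volume_Icc]


lemma volume_box_le (n : ℕ) (a b : Fin n → ℝ) (d : Fin n) (c : ℝ)
    (hd : b d - a d ≤ c) (h : ∀ e, e ≠ d → b e - a e ≤ 1) :
    volume {y : EuclideanSpace ℝ (Fin n) | ∀ e, y e ∈ Icc (a e) (b e)} ≤ ENNReal.ofReal c := by
  rw [volume_box]
  calc ∏ e, ENNReal.ofReal (b e - a e)
      ≤ ∏ e, (if e = d then ENNReal.ofReal c else 1) := by
        refine Finset.prod_le_prod' fun e _ => ?_
        by_cases he : e = d
        · subst he; simp [ENNReal.ofReal_le_ofReal hd]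
        · simp only [he, if_false]
          exact ENNReal.ofReal_le_one.2 (h e he)
    _ = ENNReal.ofReal c := by
        rw [Finset.prod_eq_single d (fun e _ he => if_neg he) (by simp)]
        simp

/-- volume of the set where `x ∈ S` and `x + v ∈ S` disagree, `S` the unit cube. -/

lemma volume_bad_le (n : ℕ) (v : EuclideanSpace ℝ (Fin n)) :
    volume {x : EuclideanSpace ℝ (Fin n) |
        ¬ ((∀ d, |x d| ≤ 1/2) ↔ (∀ d, |(x + v) d| ≤ 1/2))}
      ≤ 4 * n * ENNReal.ofReal ‖v‖ := by
  have habs : ∀ d, |v d| ≤ ‖v‖ := by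
    intro d
    have h1 : |v d| = Real.sqrt (|v d| ^ 2) := by
      rw [Real.sqrt_sq_eq_abs, abs_abs]
    rw [h1, EuclideanSpace.norm_eq]
    apply Real.sqrt_le_sqrt
    exact Finset.single_le_sum (f := fun e => |v e| ^ 2) (fun e _ => by positivity) (Finset.mem_univ d)
  set P : Fin n → Set (EuclideanSpace ℝ (Fin n)) := fun d =>
    {y | ∀ e, y e ∈ Icc (if e = d then 1/2 - v d else -(1/2)) (1/2 : ℝ)}
  set N : Fin n → Set (EuclideanSpace ℝ (Fin n)) := fun d =>
    {y | ∀ e, y e ∈ Icc (-(1/2) : ℝ) (if e = d then -(1/2) - v d else 1/2)}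
  set P' : Fin n → Set (EuclideanSpace ℝ (Fin n)) := fun d =>
    {y | ∀ e, y e ∈ Icc (if e = d then 1/2 else -(1/2) - v e)
      (if e = d then 1/2 - v d else 1/2 - v e)}
  set N' : Fin n → Set (EuclideanSpace ℝ (Fin n)) := fun d =>
    {y | ∀ e, y e ∈ Icc (-(1/2) - v e) (if e = d then -(1/2) else 1/2 - v e)}
  have hsub : {x : EuclideanSpace ℝ (Fin n) |
      ¬ ((∀ d, |x d| ≤ 1/2) ↔ (∀ d, |(x + v) d| ≤ 1/2))}
      ⊆ ⋃ d, (P d ∪ N d) ∪ (P' d ∪ N' d) := by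
    intro x hx
    simp only [mem_setOf_eq, PiLp.add_apply] at hx
    by_cases hA : ∀ d, |x d| ≤ 1/2
    · have hB : ¬ ∀ d, |x d + v d| ≤ 1/2 := fun hB => hx ⟨fun _ => hB, fun _ => hA⟩
      push_neg at hB
      obtain ⟨d, hd⟩ := hB
      rcases lt_abs.1 hd with hgt | hlt
      · refine mem_iUnion.2 ⟨d, Or.inl (Or.inl fun e => ?_)⟩
        rcases abs_le.1 (hA e) with ⟨h1, h2⟩
        constructor
        · split
          · next he => subst he; linarith
          · linarith
        · exact h2
      · refine mem_iUnion.2 ⟨d, Or.inl (Or.inr fun e => ?_)⟩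
        rcases abs_le.1 (hA e) with ⟨h1, h2⟩
        constructor
        · linarith
        · split
          · next he => subst he; linarith
          · linarith
    · have hB : ∀ d, |x d + v d| ≤ 1/2 := by
        by_contra hB
        exact hx ⟨fun h => absurd h hA, fun h => absurd h hB⟩
      push_neg at hA
      obtain ⟨d, hd⟩ := hA
      rcases lt_abs.1 hd with hgt | hlt
      · refine mem_iUnion.2 ⟨d, Or.inr (Or.inl fun e => ?_)⟩
        rcases abs_le.1 (hB e) with ⟨h1, h2⟩
        constructor
        · split
          · next he => subst he; linarith
          · linarith
        · split
          · next he => subst he; linarith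
          · linarith
      · refine mem_iUnion.2 ⟨d, Or.inr (Or.inr fun e => ?_)⟩
        rcases abs_le.1 (hB e) with ⟨h1, h2⟩
        constructor
        · linarith
        · split
          · next he => subst he; linarith
          · linarith
  refine (measure_mono hsub).trans ?_
  refine (measure_iUnion_le _).trans ?_
  have hbound : ∀ d : Fin n, volume ((P d ∪ N d) ∪ (P' d ∪ N' d)) ≤ 4 * ENNReal.ofReal ‖v‖ := by
    intro d
    have hP : volume (P d) ≤ ENNReal.ofReal ‖v‖ := by
      refine volume_box_le n _ _ d ‖v‖ ?_ ?_
      · simp only [↓reduceIte]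
        have := (abs_le.1 (habs d)).2
        have h2 := neg_abs_le (v d)
        have h3 := (abs_le.1 (habs d)).1
        linarith [le_abs_self (v d), habs d]
      · intro e he; simp [if_neg he]; norm_num
    have hN : volume (N d) ≤ ENNReal.ofReal ‖v‖ := by
      refine volume_box_le n _ _ d ‖v‖ ?_ ?_
      · simp only [↓reduceIte]
        linarith [neg_abs_le (v d), habs d]
      · intro e he; simp [if_neg he]; norm_num
    have hP' : volume (P' d) ≤ ENNReal.ofReal ‖v‖ := by
      refine volume_box_le n _ _ d ‖v‖ ?_ ?_
      · simp only [↓reduceIte]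
        linarith [neg_abs_le (v d), habs d]
      · intro e he; simp [if_neg he]; norm_num
    have hN' : volume (N' d) ≤ ENNReal.ofReal ‖v‖ := by
      refine volume_box_le n _ _ d ‖v‖ ?_ ?_
      · simp only [↓reduceIte]
        linarith [le_abs_self (v d), habs d]
      · intro e he; simp [if_neg he]; norm_num
    calc volume ((P d ∪ N d) ∪ (P' d ∪ N' d))
        ≤ volume (P d ∪ N d) + volume (P' d ∪ N' d) := measure_union_le _ _
      _ ≤ (volume (P d) + volume (N d)) + (volume (P' d) + volume (N' d)) :=
          add_le_add (measure_union_le _ _) (measure_union_le _ _)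
      _ ≤ (ENNReal.ofReal ‖v‖ + ENNReal.ofReal ‖v‖) + (ENNReal.ofReal ‖v‖ + ENNReal.ofReal ‖v‖) :=
          add_le_add (add_le_add hP hN) (add_le_add hP' hN')
      _ = 4 * ENNReal.ofReal ‖v‖ := by ring
  calc (∑' d : Fin n, volume ((P d ∪ N d) ∪ (P' d ∪ N' d)))
      ≤ ∑' _ : Fin n, 4 * ENNReal.ofReal ‖v‖ := ENNReal.tsum_le_tsum hbound
    _ = n * (4 * ENNReal.ofReal ‖v‖) := by
        rw [tsum_fintype]; simp [Finset.sum_const, mul_comm]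
    _ = 4 * n * ENNReal.ofReal ‖v‖ := by ring

lemma alt_sum (r : ℕ) (hr : 1 ≤ r) :
    ∑ i ∈ Finset.range (r+1), (-1:ℝ)^(r-i) * (r.choose i : ℝ) = 0 := by
  have key : ∑ i ∈ Finset.range (r+1), (-1:ℝ)^i * (r.choose i : ℝ) = 0 := by
    have := Int.alternating_sum_range_choose (n := r)
    rw [if_neg (by omega)] at this
    have : ((∑ i ∈ Finset.range (r + 1), (-1:ℤ) ^ i * (r.choose i : ℤ) : ℤ) : ℝ) = ((0:ℤ):ℝ) := by
      rw [this]
    push_cast at this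
    exact this
  calc ∑ i ∈ Finset.range (r+1), (-1:ℝ)^(r-i) * (r.choose i : ℝ)
      = ∑ i ∈ Finset.range (r+1), (-1:ℝ)^(r-i) * (r.choose (r-i) : ℝ) := by
        refine Finset.sum_congr rfl fun i hi => ?_
        rw [Nat.choose_symm (by simpa using Nat.lt_succ_iff.1 (Finset.mem_range.1 hi))]
    _ = ∑ i ∈ Finset.range (r+1), (-1:ℝ)^i * (r.choose i : ℝ) := by
        have := Finset.sum_range_reflect (fun i => (-1:ℝ)^i * (r.choose i : ℝ)) (r+1)
        simpa using this
    _ = 0 := key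


lemma cube_measurable (n : ℕ) :
    MeasurableSet {y : EuclideanSpace ℝ (Fin n) | ∀ d, |y d| ≤ 1 / 2} := by
  have : {y : EuclideanSpace ℝ (Fin n) | ∀ d, |y d| ≤ 1 / 2} =
      (MeasurableEquiv.toLp 2 (Fin n → ℝ)).symm ⁻¹' (univ.pi fun _ => Icc (-(1/2)) (1/2)) := by
    ext y
    simp [MeasurableEquiv.toLp_symm_apply, Set.mem_pi, abs_le, -Set.pi_univ_Icc, Set.mem_Icc]
  rw [this]
  exact (MeasurableEquiv.toLp 2 (Fin n → ℝ)).symm.measurable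
    (MeasurableSet.univ_pi fun _ => measurableSet_Icc)


lemma omega_le (n r : ℕ) (hr : 1 ≤ r) (p : ℝ) (hp : 0 < p) (t : ℝ) (ht : 0 ≤ t) :
    omegaCube n r (ENNReal.ofReal p) t ≤
      (2^r : ℝ≥0∞) * ((4 * n * (r+1) * r : ℝ≥0∞) * ENNReal.ofReal t) ^ (1/p) := by
  set S := {y : EuclideanSpace ℝ (Fin n) | ∀ d, |y d| ≤ 1 / 2} with hS
  refine iSup_le ?_
  rintro ⟨h, hh⟩
  set Bad : ℕ → Set (EuclideanSpace ℝ (Fin n)) := fun i =>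
    {x | ¬ ((∀ d, |x d| ≤ 1/2) ↔ (∀ d, |(x + (i:ℝ) • h) d| ≤ 1/2))} with hBad
  have hBadMeas : ∀ i, MeasurableSet (Bad i) := by
    intro i
    have hT : MeasurableSet ((fun x : EuclideanSpace ℝ (Fin n) => x + (i:ℝ) • h) ⁻¹' S) :=
      (cube_measurable n).preimage (measurable_id.add_const _)
    have : Bad i = (S \ ((fun x => x + (i:ℝ) • h) ⁻¹' S)) ∪
        (((fun x => x + (i:ℝ) • h) ⁻¹' S) \ S) := by
      ext x
      simp only [hBad, mem_setOf_eq, mem_union, mem_diff, mem_preimage, hS]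
      tauto
    rw [this]
    exact ((cube_measurable n).diff hT).union (hT.diff (cube_measurable n))
  set D := ⋃ i ∈ Finset.range (r+1), Bad i with hD
  have hDMeas : MeasurableSet D := by
    exact MeasurableSet.biUnion (Finset.range (r+1)).countable_toSet fun i _ => hBadMeas i
  have hpt : ∀ x, ‖∑ i ∈ Finset.range (r + 1), (-1 : ℝ) ^ (r - i) * (r.choose i : ℝ) *
      S.indicator (fun _ => (1 : ℝ)) (x + (i : ℝ) • h)‖ ≤
      ‖D.indicator (fun _ => ((2:ℝ)^r)) x‖ := by
    intro x
    by_cases hx : x ∈ D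
    · rw [Set.indicator_of_mem hx]
      have : ‖∑ i ∈ Finset.range (r + 1), (-1 : ℝ) ^ (r - i) * (r.choose i : ℝ) *
          S.indicator (fun _ => (1 : ℝ)) (x + (i : ℝ) • h)‖ ≤
          ∑ i ∈ Finset.range (r + 1), (r.choose i : ℝ) := by
        refine (norm_sum_le _ _).trans (Finset.sum_le_sum fun i _ => ?_)
        rw [norm_mul, norm_mul, norm_pow, norm_neg, norm_one, one_pow, one_mul]
        rcases Set.indicator_eq_zero_or_self S (fun _ => (1:ℝ)) (x + (i:ℝ) • h) with h0 | h1
        · rw [h0]; simp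
        · rw [h1]; simp
      refine this.trans ?_
      rw [← Nat.cast_sum, Nat.sum_range_choose]
      rw [Real.norm_eq_abs, abs_pow, abs_two]
      push_cast
      exact le_refl _
    · have heq : ∀ i ∈ Finset.range (r+1),
          S.indicator (fun _ => (1:ℝ)) (x + (i:ℝ) • h) = S.indicator (fun _ => (1:ℝ)) x := by
        intro i hi
        have hxi : x ∉ Bad i := fun hxB => hx (Set.mem_biUnion hi hxB)
        simp only [hBad, mem_setOf_eq, not_not] at hxi
        have : (x + (i:ℝ) • h ∈ S) ↔ (x ∈ S) := by
          simp only [hS, mem_setOf_eq]; exact hxi.symm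
        by_cases hxS : x ∈ S
        · rw [Set.indicator_of_mem (this.2 hxS), Set.indicator_of_mem hxS]
        · rw [Set.indicator_of_notMem (fun hc => hxS (this.1 hc)),
            Set.indicator_of_notMem hxS]
      have h0 : (∑ i ∈ Finset.range (r + 1), (-1 : ℝ) ^ (r - i) * (r.choose i : ℝ) *
          S.indicator (fun _ => (1 : ℝ)) (x + (i : ℝ) • h)) = 0 := by
        calc ∑ i ∈ Finset.range (r + 1), (-1 : ℝ) ^ (r - i) * (r.choose i : ℝ) *
              S.indicator (fun _ => (1 : ℝ)) (x + (i : ℝ) • h)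
            = ∑ i ∈ Finset.range (r + 1), (-1 : ℝ) ^ (r - i) * (r.choose i : ℝ) *
              S.indicator (fun _ => (1 : ℝ)) x := Finset.sum_congr rfl fun i hi => by rw [heq i hi]
          _ = (∑ i ∈ Finset.range (r + 1), (-1 : ℝ) ^ (r - i) * (r.choose i : ℝ)) *
              S.indicator (fun _ => (1 : ℝ)) x := by rw [Finset.sum_mul]
          _ = 0 := by rw [alt_sum r hr, zero_mul]
      rw [h0, norm_zero]
      positivity
  have hp0 : ENNReal.ofReal p ≠ 0 := by simp [hp, ENNReal.ofReal_eq_zero, not_le]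
  have hptop : ENNReal.ofReal p ≠ ∞ := ENNReal.ofReal_ne_top
  refine le_trans (eLpNorm_mono hpt) ?_
  rw [eLpNorm_indicator_const hDMeas hp0 hptop]
  show (‖(2:ℝ)^r‖₊ : ℝ≥0∞) * volume D ^ (1 / (ENNReal.ofReal p).toReal) ≤ _
  calc (‖(2:ℝ)^r‖₊ : ℝ≥0∞) * volume D ^ (1 / (ENNReal.ofReal p).toReal)
      ≤ (2^r : ℝ≥0∞) * ((4 * n * (r+1) * r : ℝ≥0∞) * ENNReal.ofReal t) ^ (1/p) := by
        rw [ENNReal.toReal_ofReal hp.le]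
        refine mul_le_mul' ?_ ?_
        · apply le_of_eq
          simp [nnnorm_pow]
        · refine ENNReal.rpow_le_rpow ?_ (by positivity)
          calc volume D ≤ ∑ i ∈ Finset.range (r+1), volume (Bad i) :=
              measure_biUnion_finset_le _ _
            _ ≤ ∑ _i ∈ Finset.range (r+1), (4 * n : ℝ≥0∞) * (ENNReal.ofReal ((r:ℝ) * t)) := by
                refine Finset.sum_le_sum fun i hi => ?_
                refine (volume_bad_le n ((i:ℝ) • h)).trans ?_
                refine mul_le_mul_right (ENNReal.ofReal_le_ofReal ?_) _
                rw [norm_smul, Real.norm_eq_abs, Nat.abs_cast]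
                have hi' : (i:ℝ) ≤ r := by
                  exact_mod_cast Nat.lt_succ_iff.1 (Finset.mem_range.1 hi)
                have : (i:ℝ) * ‖h‖ ≤ (r:ℝ) * t := by
                  apply mul_le_mul hi' hh (norm_nonneg _) (by positivity)
                exact this
            _ = (4 * n * (r+1) * r : ℝ≥0∞) * ENNReal.ofReal t := by
                rw [Finset.sum_const, Finset.card_range, ENNReal.ofReal_mul (by positivity)]
                simp [nsmul_eq_mul]
                ring


lemma omega_ge (n r : ℕ) (hn : 1 ≤ n) (p : ℝ) (hp : 0 < p) (t : ℝ) (ht : t ∈ Ioo (0:ℝ) 1) :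
    ENNReal.ofReal (t/2) ^ (1/p) ≤ omegaCube n r (ENNReal.ofReal p) t := by
  obtain ⟨ht0, ht1⟩ := ht
  set S := {y : EuclideanSpace ℝ (Fin n) | ∀ d, |y d| ≤ 1 / 2} with hS
  set d0 : Fin n := ⟨0, hn⟩
  set h : EuclideanSpace ℝ (Fin n) := EuclideanSpace.single d0 t with hh
  have hnorm : ‖h‖ ≤ t := by
    rw [hh, EuclideanSpace.norm_single, Real.norm_eq_abs, abs_of_pos ht0]
  set A := {y : EuclideanSpace ℝ (Fin n) |
      ∀ e, y e ∈ Icc (if e = d0 then 1/2 - t/2 else -(1/2)) (1/2 : ℝ)} with hA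
  have hAmeas : MeasurableSet A := by
    have : A = (MeasurableEquiv.toLp 2 (Fin n → ℝ)).symm ⁻¹'
        (univ.pi fun e => Icc (if e = d0 then 1/2 - t/2 else -(1/2)) (1/2 : ℝ)) := by
      ext y
      simp [MeasurableEquiv.toLp_symm_apply, Set.mem_pi, -Set.pi_univ_Icc]
      rw [hA]
      norm_num [Set.mem_Icc]
    rw [this]
    exact (MeasurableEquiv.toLp 2 (Fin n → ℝ)).symm.measurable
      (MeasurableSet.univ_pi fun _ => measurableSet_Icc)
  have hvolA : volume A = ENNReal.ofReal (t/2) := by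
    rw [hA, volume_box]
    rw [Finset.prod_eq_single d0 (fun e _ he => by rw [if_neg he]; norm_num) (by simp)]
    simp only [↓reduceIte]
    norm_num
  have hcoord : ∀ (x : EuclideanSpace ℝ (Fin n)) (i : ℕ) (d : Fin n),
      (x + (i:ℝ) • h) d = x d + (i:ℝ) * (if d = d0 then t else 0) := by
    intro x i d
    rw [PiLp.add_apply, PiLp.smul_apply, hh, smul_eq_mul, EuclideanSpace.single_apply]
  have hpt : ∀ x, ‖A.indicator (fun _ => (1:ℝ)) x‖ ≤
      ‖∑ i ∈ Finset.range (r + 1), (-1 : ℝ) ^ (r - i) * (r.choose i : ℝ) *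
        S.indicator (fun _ => (1 : ℝ)) (x + (i : ℝ) • h)‖ := by
    intro x
    by_cases hx : x ∈ A
    · have hxA := hx
      rw [hA, mem_setOf_eq] at hxA
      have hsum : (∑ i ∈ Finset.range (r + 1), (-1 : ℝ) ^ (r - i) * (r.choose i : ℝ) *
          S.indicator (fun _ => (1 : ℝ)) (x + (i : ℝ) • h)) = (-1:ℝ)^r := by
        rw [Finset.sum_eq_single 0]
        · have hxS : x + ((0:ℕ):ℝ) • h ∈ S := by
            rw [hS, mem_setOf_eq]
            intro d
            rw [hcoord]
            rcases hxA d with ⟨h1, h2⟩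
            by_cases hd : d = d0
            · rw [if_pos hd]
              rw [if_pos hd] at h1
              rw [abs_le]
              constructor <;> push_cast <;> [linarith; linarith]
            · rw [if_neg hd]
              rw [if_neg hd] at h1
              rw [abs_le]
              constructor <;> push_cast <;> [linarith; linarith]
          rw [Set.indicator_of_mem hxS]
          simp
        · intro i hi hi0
          have hi1 : 1 ≤ i := Nat.one_le_iff_ne_zero.2 hi0
          have hxS : x + ((i:ℕ):ℝ) • h ∉ S := by
            rw [hS, mem_setOf_eq]
            push_neg
            refine ⟨d0, ?_⟩
            rw [hcoord, if_pos rfl]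
            have h1 : 1/2 - t/2 ≤ x d0 := by
              have := (hxA d0).1; rwa [if_pos rfl] at this
            have hit : t ≤ (i:ℝ) * t := by
              nlinarith [(Nat.one_le_cast (α := ℝ)).2 hi1]
            rw [lt_abs]
            left
            linarith
          rw [Set.indicator_of_notMem hxS]
          ring
        · intro hc
          simp at hc
      rw [hsum, Set.indicator_of_mem hx]
      simp
    · rw [Set.indicator_of_notMem hx, norm_zero]
      positivity
  have hp0 : ENNReal.ofReal p ≠ 0 := by simp [hp, ENNReal.ofReal_eq_zero, not_le]
  have hptop : ENNReal.ofReal p ≠ ∞ := ENNReal.ofReal_ne_top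
  have key : ENNReal.ofReal (t/2) ^ (1/p) ≤
      eLpNorm (fun x : EuclideanSpace ℝ (Fin n) =>
        ∑ i ∈ Finset.range (r + 1), (-1 : ℝ) ^ (r - i) * (r.choose i : ℝ) *
          S.indicator (fun _ => (1 : ℝ)) (x + (i : ℝ) • h)) (ENNReal.ofReal p) volume := by
    refine le_trans (le_of_eq ?_) (eLpNorm_mono hpt)
    rw [eLpNorm_indicator_const hAmeas hp0 hptop, hvolA, ENNReal.toReal_ofReal hp.le]
    simp
  exact key.trans (le_iSup (fun hsub : {h : EuclideanSpace ℝ (Fin n) // ‖h‖ ≤ t} =>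
    eLpNorm (fun x : EuclideanSpace ℝ (Fin n) =>
        ∑ i ∈ Finset.range (r + 1), (-1 : ℝ) ^ (r - i) * (r.choose i : ℝ) *
          S.indicator (fun _ => (1 : ℝ)) (x + (i : ℝ) • (hsub : EuclideanSpace ℝ (Fin n))))
      (ENNReal.ofReal p) volume) ⟨h, hnorm⟩)


lemma lintegral_inv_Ioo_top : ∫⁻ t in Ioo (0:ℝ) 1, ENNReal.ofReal t⁻¹ = ∞ := by
  by_contra hfin
  have hlt : ∫⁻ t in Ioo (0:ℝ) 1, ENNReal.ofReal t⁻¹ < ⊤ := lt_top_iff_ne_top.2 hfin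
  have hint : IntegrableOn (fun t : ℝ => t⁻¹) (Ioo 0 1) := by
    constructor
    · exact (measurable_id.inv (α := ℝ)).aestronglyMeasurable
    · rw [hasFiniteIntegral_iff_ofReal
        ((ae_restrict_iff' measurableSet_Ioo).2 (ae_of_all _ fun t ht => inv_nonneg.2 ht.1.le))]
      exact hlt
  have hint' : IntegrableOn (fun t : ℝ => t ^ (-1:ℝ)) (Ioo 0 1) := by
    refine hint.congr ((ae_restrict_iff' measurableSet_Ioo).2 (ae_of_all _ fun t ht => ?_))
    dsimp only
    rw [Real.rpow_neg ht.1.le, Real.rpow_one]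
  have := (intervalIntegral.integrableOn_Ioo_rpow_iff zero_lt_one).1 hint'
  norm_num at this

/-- For `Ω = [-1/2,1/2]^n`, `0 < p < ∞`, `0 < q ≤ ∞`, `σ > 0` and an integer `r > σ`, the
Besov seminorm `(∫_0^1 t^{-σq} ω_r(χ_Ω,t)_p^q dt/t)^{1/q}` (supremum modification for
`q = ∞`) is finite if and only if `σ < 1/p`, or `σ = 1/p` and `q = ∞`. -/
theorem stmt_9 (n : ℕ) (hn : 1 ≤ n) (p σ : ℝ) (hp : 0 < p) (hσ : 0 < σ)
    (q : ℝ≥0∞) (hq : 0 < q) (r : ℕ) (hr : σ < r) :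
    ((if q = ∞ then
        ⨆ t : {t : ℝ // t ∈ Ioo (0 : ℝ) 1},
          ENNReal.ofReal ((t : ℝ) ^ (-σ)) * omegaCube n r (ENNReal.ofReal p) (t : ℝ)
      else
        (∫⁻ t in Ioo (0 : ℝ) 1,
          (ENNReal.ofReal (t ^ (-σ)) * omegaCube n r (ENNReal.ofReal p) t) ^ q.toReal *
            ENNReal.ofReal t⁻¹) ^ (1 / q.toReal)) < ∞)
      ↔ (σ < 1 / p ∨ (σ = 1 / p ∧ q = ∞)) := by
  have hr1 : 1 ≤ r := Nat.cast_pos.1 (hσ.trans hr : (0:ℝ) < r)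
  have hp0' : ENNReal.ofReal p ≠ 0 := by simp [ENNReal.ofReal_eq_zero, not_le, hp]
  set C : ℝ≥0∞ := (4 * n * (r+1) * r : ℝ≥0∞) with hC
  set K : ℝ≥0∞ := 2^r * C^(1/p) with hK
  have hCtop : C ≠ ∞ := by
    rw [hC]
    exact ENNReal.mul_ne_top (ENNReal.mul_ne_top (ENNReal.mul_ne_top (by norm_num)
      (ENNReal.natCast_ne_top n)) (by exact ENNReal.add_ne_top.2 ⟨ENNReal.natCast_ne_top r, by norm_num⟩))
      (ENNReal.natCast_ne_top r)
  have hKtop : K ≠ ∞ := by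
    rw [hK]
    exact ENNReal.mul_ne_top (by simp) (ENNReal.rpow_ne_top_of_nonneg (by positivity) hCtop)
  have hup : ∀ t ∈ Ioo (0:ℝ) 1,
      omegaCube n r (ENNReal.ofReal p) t ≤ K * ENNReal.ofReal t ^ (1/p) := by
    intro t ht
    refine (omega_le n r hr1 p hp t ht.1.le).trans ?_
    rw [ENNReal.mul_rpow_of_nonneg _ _ (by positivity : (0:ℝ) ≤ 1/p), hK, hC]
    exact le_of_eq (by ring_nf)
  set c : ℝ≥0∞ := ENNReal.ofReal (1/2) ^ (1/p) with hc
  have hc0 : c ≠ 0 := by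
    rw [hc]
    refine (ENNReal.rpow_pos ?_ ENNReal.ofReal_ne_top).ne'
    rw [ENNReal.ofReal_pos]; norm_num
  have hctop : c ≠ ∞ := ENNReal.rpow_ne_top_of_nonneg (by positivity) ENNReal.ofReal_ne_top
  have hlow : ∀ t ∈ Ioo (0:ℝ) 1,
      c * ENNReal.ofReal t ^ (1/p) ≤ omegaCube n r (ENNReal.ofReal p) t := by
    intro t ht
    refine le_trans (le_of_eq ?_) (omega_ge n r hn p hp t ht)
    rw [show t/2 = t * (1/2) by ring, ENNReal.ofReal_mul ht.1.le,
      ENNReal.mul_rpow_of_nonneg _ _ (by positivity : (0:ℝ) ≤ 1/p), hc, mul_comm]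
  have hone : ∀ t : ℝ, t ∈ Ioo (0:ℝ) 1 → ENNReal.ofReal t ≠ 0 := by
    intro t ht
    simp [ENNReal.ofReal_eq_zero, not_le, ht.1]
  have hgup : ∀ t ∈ Ioo (0:ℝ) 1,
      ENNReal.ofReal (t^(-σ)) * omegaCube n r (ENNReal.ofReal p) t ≤
        K * ENNReal.ofReal t ^ (1/p - σ) := by
    intro t ht
    calc ENNReal.ofReal (t^(-σ)) * omegaCube n r (ENNReal.ofReal p) t
        ≤ ENNReal.ofReal t ^ (-σ) * (K * ENNReal.ofReal t ^ (1/p)) := by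
          rw [← ENNReal.ofReal_rpow_of_pos ht.1]
          exact mul_le_mul_right (hup t ht) _
      _ = K * ENNReal.ofReal t ^ (1/p - σ) := by
          rw [show 1/p - σ = -σ + 1/p by ring,
            ENNReal.rpow_add _ _ (hone t ht) ENNReal.ofReal_ne_top]
          ring
  have hglow : ∀ t ∈ Ioo (0:ℝ) 1,
      c * ENNReal.ofReal t ^ (1/p - σ) ≤
        ENNReal.ofReal (t^(-σ)) * omegaCube n r (ENNReal.ofReal p) t := by
    intro t ht
    calc c * ENNReal.ofReal t ^ (1/p - σ)
        = ENNReal.ofReal t ^ (-σ) * (c * ENNReal.ofReal t ^ (1/p)) := by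
          rw [show 1/p - σ = -σ + 1/p by ring,
            ENNReal.rpow_add _ _ (hone t ht) ENNReal.ofReal_ne_top]
          ring
      _ ≤ ENNReal.ofReal (t^(-σ)) * omegaCube n r (ENNReal.ofReal p) t := by
          rw [← ENNReal.ofReal_rpow_of_pos ht.1]
          exact mul_le_mul_right (hlow t ht) _
  by_cases hqtop : q = ∞
  · rw [if_pos hqtop]
    constructor
    · intro hfin
      by_contra hcon
      push_neg at hcon
      obtain ⟨h1, h2⟩ := hcon
      have hne : σ ≠ 1/p := fun hc => (h2 hc) hqtop
      have hlt : 1/p < σ := lt_of_le_of_ne h1 (Ne.symm hne)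
      set e : ℝ := σ - 1/p with he
      have he0 : 0 < e := by rw [he]; linarith
      set B : ℝ≥0∞ := ⨆ t : {t : ℝ // t ∈ Ioo (0 : ℝ) 1},
          ENNReal.ofReal ((t : ℝ) ^ (-σ)) * omegaCube n r (ENNReal.ofReal p) (t : ℝ) with hB
      have hBtop : B ≠ ∞ := hfin.ne
      have hble : ∀ t : ℝ, t ∈ Ioo (0:ℝ) 1 → ENNReal.ofReal (t ^ (-e)) ≤ B / c := by
        intro t ht
        have h3 : c * ENNReal.ofReal t ^ (1/p - σ) ≤ B := by
          refine (hglow t ht).trans ?_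
          rw [hB]
          exact le_iSup (fun s : {t : ℝ // t ∈ Ioo (0 : ℝ) 1} =>
            ENNReal.ofReal ((s : ℝ) ^ (-σ)) * omegaCube n r (ENNReal.ofReal p) (s : ℝ)) ⟨t, ht⟩
        rw [show -e = 1/p - σ by rw [he]; ring, ← ENNReal.ofReal_rpow_of_pos ht.1]
        rw [ENNReal.le_div_iff_mul_le (Or.inl hc0) (Or.inl hctop), mul_comm]
        exact h3
      have hBc : B / c ≠ ∞ := (ENNReal.div_lt_top hBtop hc0).ne
      set M : ℝ := (B / c).toReal with hM
      have hM0 : 0 ≤ M := ENNReal.toReal_nonneg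
      set t0 : ℝ := min (1/2) ((M+1) ^ (-(1/e))) with ht0def
      have hMp : (0:ℝ) < M + 1 := by linarith
      have ht0pos : 0 < t0 := lt_min (by norm_num) (Real.rpow_pos_of_pos hMp _)
      have ht0lt : t0 < 1 := lt_of_le_of_lt (min_le_left _ _) (by norm_num)
      have ht0 : t0 ∈ Ioo (0:ℝ) 1 := ⟨ht0pos, ht0lt⟩
      have hge : M + 1 ≤ t0 ^ (-e) := by
        have h4 : t0 ≤ (M+1) ^ (-(1/e)) := min_le_right _ _
        have h5 : ((M+1) ^ (-(1/e))) ^ (-e) ≤ t0 ^ (-e) :=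
          Real.rpow_le_rpow_of_nonpos ht0pos h4 (by linarith)
        refine le_trans (le_of_eq ?_) h5
        rw [← Real.rpow_mul hMp.le]
        rw [show -(1/e) * -e = 1 by field_simp, Real.rpow_one]
      have hle : t0 ^ (-e) ≤ M := by
        rw [hM, ← ENNReal.ofReal_le_iff_le_toReal hBc]
        exact hble t0 ht0
      linarith
    · intro hor
      have hσle : σ ≤ 1/p := by
        rcases hor with h | h
        · exact h.le
        · exact h.1.le
      refine lt_of_le_of_lt (iSup_le ?_) (lt_top_iff_ne_top.2 hKtop)
      rintro ⟨t, ht⟩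
      refine (hgup t ht).trans ?_
      calc K * ENNReal.ofReal t ^ (1/p - σ)
          ≤ K * 1 := mul_le_mul_right
            (ENNReal.rpow_le_one (ENNReal.ofReal_le_one.2 ht.2.le) (by linarith)) _
        _ = K := mul_one K
  · rw [if_neg hqtop]
    have hq0 : q ≠ 0 := hq.ne'
    have hqr : 0 < q.toReal := ENNReal.toReal_pos hq0 hqtop
    rw [ENNReal.rpow_lt_top_iff_of_pos (by positivity : (0:ℝ) < 1 / q.toReal)]
    have hRHS : (σ < 1 / p ∨ (σ = 1 / p ∧ q = ∞)) ↔ σ < 1/p := by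
      simp [hqtop]
    rw [hRHS]
    constructor
    · intro hfin
      by_contra hcon
      push_neg at hcon
      set s : ℝ := (1/p - σ) * q.toReal with hs
      have hs0 : s ≤ 0 := mul_nonpos_of_nonpos_of_nonneg (by linarith) hqr.le
      have hlower : ∀ t ∈ Ioo (0:ℝ) 1,
          c ^ q.toReal * ENNReal.ofReal t⁻¹ ≤
            (ENNReal.ofReal (t^(-σ)) * omegaCube n r (ENNReal.ofReal p) t) ^ q.toReal *
              ENNReal.ofReal t⁻¹ := by
        intro t ht
        refine mul_le_mul_left ?_ _
        refine le_trans ?_ (ENNReal.rpow_le_rpow (hglow t ht) hqr.le)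
        rw [ENNReal.mul_rpow_of_nonneg _ _ hqr.le]
        refine le_mul_of_one_le_right' ?_
        calc (1:ℝ≥0∞) = (ENNReal.ofReal t ^ ((0:ℝ))) ^ q.toReal := by
              rw [ENNReal.rpow_zero, ENNReal.one_rpow]
          _ ≤ (ENNReal.ofReal t ^ (1/p - σ)) ^ q.toReal := by
              refine ENNReal.rpow_le_rpow ?_ hqr.le
              exact ENNReal.rpow_le_rpow_of_exponent_ge (ENNReal.ofReal_le_one.2 ht.2.le)
                (by linarith)
      have htop : (∫⁻ t in Ioo (0 : ℝ) 1,
          (ENNReal.ofReal (t ^ (-σ)) * omegaCube n r (ENNReal.ofReal p) t) ^ q.toReal *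
            ENNReal.ofReal t⁻¹) = ∞ := by
        rw [eq_top_iff]
        calc (⊤:ℝ≥0∞) = c ^ q.toReal * ∫⁻ t in Ioo (0:ℝ) 1, ENNReal.ofReal t⁻¹ := by
              rw [lintegral_inv_Ioo_top, ENNReal.mul_top
                ((ENNReal.rpow_pos (hc0.bot_lt) hctop).ne')]
          _ = ∫⁻ t in Ioo (0:ℝ) 1, c ^ q.toReal * ENNReal.ofReal t⁻¹ :=
              (lintegral_const_mul' _ _ (ENNReal.rpow_ne_top_of_nonneg hqr.le hctop)).symm
          _ ≤ _ := setLIntegral_mono' measurableSet_Ioo hlower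
      rw [htop] at hfin
      exact absurd hfin (lt_irrefl _)
    · intro hσlt
      set s : ℝ := (1/p - σ) * q.toReal with hs
      have hs0 : 0 < s := mul_pos (by linarith) hqr
      have hupper : ∀ t ∈ Ioo (0:ℝ) 1,
          (ENNReal.ofReal (t^(-σ)) * omegaCube n r (ENNReal.ofReal p) t) ^ q.toReal *
            ENNReal.ofReal t⁻¹ ≤ K ^ q.toReal * ENNReal.ofReal (t ^ (s - 1)) := by
        intro t ht
        calc (ENNReal.ofReal (t^(-σ)) * omegaCube n r (ENNReal.ofReal p) t) ^ q.toReal *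
            ENNReal.ofReal t⁻¹
            ≤ (K * ENNReal.ofReal t ^ (1/p - σ)) ^ q.toReal * ENNReal.ofReal t⁻¹ :=
              mul_le_mul_left (ENNReal.rpow_le_rpow (hgup t ht) hqr.le) _
          _ = K ^ q.toReal * ENNReal.ofReal (t ^ (s - 1)) := by
              rw [ENNReal.mul_rpow_of_nonneg _ _ hqr.le, ← ENNReal.rpow_mul, ← hs,
                ENNReal.ofReal_rpow_of_pos ht.1,
                show (t:ℝ)⁻¹ = t ^ (-1:ℝ) by rw [Real.rpow_neg ht.1.le, Real.rpow_one],
                mul_assoc, ← ENNReal.ofReal_mul (Real.rpow_nonneg ht.1.le _), ← Real.rpow_add ht.1,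
                show s + -1 = s - 1 by ring]
      have hint : IntegrableOn (fun t : ℝ => t ^ (s - 1)) (Ioo 0 1) :=
        (intervalIntegral.integrableOn_Ioo_rpow_iff zero_lt_one).2 (by linarith)
      calc (∫⁻ t in Ioo (0 : ℝ) 1,
          (ENNReal.ofReal (t ^ (-σ)) * omegaCube n r (ENNReal.ofReal p) t) ^ q.toReal *
            ENNReal.ofReal t⁻¹)
          ≤ ∫⁻ t in Ioo (0:ℝ) 1, K ^ q.toReal * ENNReal.ofReal (t ^ (s - 1)) :=
            setLIntegral_mono' measurableSet_Ioo hupper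
        _ = K ^ q.toReal * ∫⁻ t in Ioo (0:ℝ) 1, ENNReal.ofReal (t ^ (s - 1)) :=
            lintegral_const_mul' _ _ (ENNReal.rpow_ne_top_of_nonneg hqr.le hKtop)
        _ < ∞ := ENNReal.mul_lt_top
            (lt_top_iff_ne_top.2 (ENNReal.rpow_ne_top_of_nonneg hqr.le hKtop))
            hint.lintegral_lt_top

end
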